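/- There exists a constant c > 0 such that for every N there exist a tree T on n ≥ N vertices and two proper 4-colorings s and t of T such that every recoloring schedule from s to t using colors {1,2,3,4} has length at least c·log₂ n. -/

import Mathlib

open SimpleGraph

/-- A proper `m`-coloring: colors in `{1,…,m}`, adjacent vertices get distinct colors. -/
def IsProperColoring {V : Type*} (G : SimpleGraph V) (m : ℕ) (x : V → ℕ) : Prop :=
  (∀ v, x v ∈ Finset.Icc 1 m) ∧ ∀ ⦃u v : V⦄, G.Adj u v → x u ≠ x v

/-- A recoloring schedule from `s` to `t` of length `ℓ` using colors `{1,…,m}`: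
a sequence of proper `m`-colorings `X 0 = s, …, X ℓ = t` such that at each step the set of
vertices that change color is an independent set. -/
def IsRecolorSchedule {V : Type*} (G : SimpleGraph V) (m : ℕ) (s t : V → ℕ)
    (ℓ : ℕ) (X : ℕ → V → ℕ) : Prop :=
  X 0 = s ∧ X ℓ = t ∧ (∀ i ≤ ℓ, IsProperColoring G m (X i)) ∧
  ∀ i, 1 ≤ i → i ≤ ℓ → ∀ ⦃u v : V⦄, G.Adj u v → X (i - 1) u = X i u ∨ X (i - 1) v = X i v


abbrev Vk (k : ℕ) := {l : List (Fin 3) // l.length ≤ k}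

def Gk (k : ℕ) : SimpleGraph (Vk k) where
  Adj u v := (∃ j : Fin 3, u.val = j :: v.val) ∨ (∃ j : Fin 3, v.val = j :: u.val)
  symm := by constructor; rintro u v (h | h); exacts [Or.inr h, Or.inl h]
  loopless := by
    constructor
    rintro v (⟨j, h⟩ | ⟨j, h⟩) <;>
      · have := congrArg List.length h
        simp at this

def encode (k : ℕ) (v : Vk k) : Fin (k+1) → Fin 4 := fun i =>
  if h : (i : ℕ) < v.val.length then ⟨(v.val.get ⟨i, h⟩).val + 1, by omega⟩ else 0

lemma encode_inj (k : ℕ) : Function.Injective (encode k) := by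
  intro v₁ v₂ h
  have hlen : v₁.val.length = v₂.val.length := by
    by_contra hne
    rcases Nat.lt_or_ge v₁.val.length v₂.val.length with hlt | hge
    · have h1 := congrFun h ⟨v₁.val.length, by omega⟩
      simp only [encode] at h1
      rw [dif_neg (by simp), dif_pos (by simpa using hlt)] at h1
      exact absurd (congrArg Fin.val h1) (by simp)
    · have hlt : v₂.val.length < v₁.val.length := by omega
      have h1 := congrFun h ⟨v₂.val.length, by omega⟩
      simp only [encode] at h1
      rw [dif_pos (by simpa using hlt), dif_neg (by simp)] at h1
      exact absurd (congrArg Fin.val h1) (by simp)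
  apply Subtype.ext
  apply List.ext_get hlen
  intro i h1 h2
  have h3 := congrFun h ⟨i, by omega⟩
  simp only [encode] at h3
  rw [dif_pos (show (i:ℕ) < v₁.val.length by omega), dif_pos (show (i:ℕ) < v₂.val.length by omega)] at h3
  have := congrArg Fin.val h3
  simp only at this
  exact Fin.ext (by omega)

noncomputable instance instFintypeVk (k : ℕ) : Fintype (Vk k) :=
  Fintype.ofInjective (encode k) (encode_inj k)

lemma card_Vk_le (k : ℕ) : Fintype.card (Vk k) ≤ 4 ^ (k+1) := by
  have := Fintype.card_le_of_injective (encode k) (encode_inj k)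
  simpa using this

lemma le_card_Vk (k : ℕ) : k + 1 ≤ Fintype.card (Vk k) := by
  have : Function.Injective (fun i : Fin (k+1) => (⟨List.replicate i 0, by simp; omega⟩ : Vk k)) := by
    intro i j hij
    have := congrArg (fun v : Vk k => v.val.length) hij
    simpa using Fin.ext (by simpa using this)
  simpa using Fintype.card_le_of_injective _ this

def off : List (Fin 3) → ZMod 4 := fun l => (l.map fun j => ((j : ℕ) + 1 : ZMod 4)).sum

@[simp] lemma off_nil : off [] = 0 := rfl

@[simp] lemma off_cons (j : Fin 3) (l : List (Fin 3)) :
    off (j :: l) = ((j : ℕ) + 1 : ZMod 4) + off l := by simp [off]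

def colr (k : ℕ) (a : ZMod 4) (v : Vk k) : ℕ := (a + off v.val).val + 1

lemma jadd_ne_zero (j : Fin 3) : (((j : ℕ) + 1 : ℕ) : ZMod 4) ≠ 0 := by
  fin_cases j <;> decide

lemma colr_proper (k : ℕ) (a : ZMod 4) : IsProperColoring (Gk k) 4 (colr k a) := by
  constructor
  · intro v
    have := (a + off v.val).val_lt
    simp only [Finset.mem_Icc, colr]
    omega
  · have key : ∀ u v : Vk k, (∃ j : Fin 3, u.val = j :: v.val) → colr k a u ≠ colr k a v := by
      rintro u v ⟨j, hj⟩ h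
      have hval : a + off u.val = a + off v.val := by
        have h1 : (a + off u.val).val = (a + off v.val).val := by
          simpa [colr] using h
        exact ZMod.val_injective _ h1
      rw [hj, off_cons] at hval
      have : (((j : ℕ) + 1 : ℕ) : ZMod 4) = 0 := by push_cast at hval ⊢; linear_combination hval
      exact jadd_ne_zero j this
    rintro u v (h | h)
    · exact key u v h
    · exact (key v u h).symm

/-- The freezing lemma: vertices at depth d stay at their initial color for k - d rounds. -/
lemma freeze (k ℓ : ℕ) (X : ℕ → Vk k → ℕ) (a : ZMod 4)
    (h0 : X 0 = colr k a)
    (hp : ∀ i ≤ ℓ, IsProperColoring (Gk k) 4 (X i))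
    (hs : ∀ i, 1 ≤ i → i ≤ ℓ → ∀ ⦃u v : Vk k⦄, (Gk k).Adj u v →
      X (i - 1) u = X i u ∨ X (i - 1) v = X i v) :
    ∀ i, i ≤ ℓ → ∀ v : Vk k, i + v.val.length ≤ k → X i v = colr k a v := by
  intro i
  induction i with
  | zero => intro _ v _; rw [h0]
  | succ i ih =>
    intro hil v hv
    have hiℓ : i ≤ ℓ := by omega
    have hvlen : v.val.length < k := by omega
    -- children
    set z := a + off v.val with hz
    have child : ∀ j : Fin 3, ∃ u : Vk k, (Gk k).Adj u v ∧ X i u = colr k a u ∧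
        colr k a u = (z + (((j : ℕ) + 1 : ℕ) : ZMod 4)).val + 1 ∧
        (∀ b, X (i+1) u = b → X i u = b ∨ X i v = X (i+1) v) := by
      intro j
      refine ⟨⟨j :: v.val, by simp; omega⟩, Or.inl ⟨j, rfl⟩, ?_, ?_, ?_⟩
      · exact ih hiℓ _ (by simp; omega)
      · simp [colr, hz]; ring_nf
      · intro b hb
        have := hs (i+1) (by omega) (by omega) (Or.inl ⟨j, rfl⟩ : (Gk k).Adj ⟨j :: v.val, by simp; omega⟩ v)
        simp only [Nat.add_sub_cancel] at this
        rcases this with h | h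
        · exact Or.inl (h.trans hb)
        · exact Or.inr h
    by_cases hveq : X i v = X (i+1) v
    · rw [← hveq]; exact ih hiℓ v (by omega)
    · exfalso
      -- all children keep their colors at step i+1
      have hchild : ∀ j : Fin 3, X (i+1) v ≠ (z + (((j : ℕ) + 1 : ℕ) : ZMod 4)).val + 1 := by
        intro j
        obtain ⟨u, hadj, hXi, hcol, hkeep⟩ := child j
        rcases hkeep (X (i+1) u) rfl with h | h
        · have hne := ((hp (i+1) (by omega)).2 hadj).symm
          rw [← h, hXi, hcol] at hne
          exact hne
        · exact absurd h hveq
      -- X (i+1) v ∈ Icc 1 4, so it equals w.val + 1 for some w : ZMod 4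
      have hmem := (hp (i+1) (by omega)).1 v
      simp only [Finset.mem_Icc] at hmem
      set b := X (i+1) v with hb
      set w : ZMod 4 := ((b - 1 : ℕ) : ZMod 4) with hw
      have hwval : w.val = b - 1 := ZMod.val_cast_of_lt (by omega)
      have hbw : b = w.val + 1 := by omega
      -- w ≠ z + (j+1) for all j, hence w = z
      have hwz : w = z := by
        have h1 : w ≠ z + 1 := fun h => hchild 0 (by rw [hbw, h]; norm_num)
        have h2 : w ≠ z + 2 := fun h => hchild 1 (by rw [hbw, h]; norm_num)
        have h3 : w ≠ z + 3 := fun h => hchild 2 (by rw [hbw, h]; norm_num)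
        have : w - z = 0 ∨ w - z = 1 ∨ w - z = 2 ∨ w - z = 3 := by
          generalize w - z = d; revert d; decide
        rcases this with h | h | h | h
        · linear_combination h
        · exact absurd (by linear_combination h) h1
        · exact absurd (by linear_combination h) h2
        · exact absurd (by linear_combination h) h3
      -- hence X (i+1) v = colr a v = X i v, contradiction
      apply hveq
      rw [ih hiℓ v (by omega), colr, ← hz, ← hwz, ← hbw]

-- connectivity
lemma Gk_reachable (k : ℕ) : ∀ (l : List (Fin 3)) (h : l.length ≤ k),
    (Gk k).Reachable ⟨l, h⟩ ⟨[], by simp⟩ := by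
  intro l
  induction l with
  | nil => intro h; rfl
  | cons j l ih =>
    intro h
    have hl : l.length ≤ k := by simp at h; omega
    exact (SimpleGraph.Adj.reachable (Or.inl ⟨j, rfl⟩ : (Gk k).Adj ⟨j :: l, h⟩ ⟨l, hl⟩)).trans (ih hl)

lemma Gk_connected (k : ℕ) : (Gk k).Connected := by
  rw [SimpleGraph.connected_iff]
  refine ⟨fun u v => ?_, ⟨⟨[], by simp⟩⟩⟩
  exact (Gk_reachable k u.val u.prop).trans (Gk_reachable k v.val v.prop).symm

-- acyclicity helper: first edge of a nonempty closed walk at a max-length vertex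
lemma first_edge (k : ℕ) (w : Vk k) (d : (Gk k).Walk w w) (hd : d ≠ SimpleGraph.Walk.nil)
    (hmax : ∀ x ∈ d.support, x.val.length ≤ w.val.length) :
    ∃ u : Vk k, d.edges.head? = some s(w, u) ∧ u.val = w.val.tail := by
  cases d with
  | nil => exact absurd rfl hd
  | @cons _ u _ hadj p =>
    refine ⟨u, by simp, ?_⟩
    have hu : u.val.length ≤ w.val.length := by
      apply hmax
      simp [SimpleGraph.Walk.support_cons]
    rcases hadj with ⟨j, hj⟩ | ⟨j, hj⟩
    · rw [hj]; rfl
    · exfalso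
      have := congrArg List.length hj
      simp at this
      omega

lemma Gk_acyclic (k : ℕ) : (Gk k).IsAcyclic := by
  intro v c hc
  -- pick vertex of max length in support
  obtain ⟨w, hwmem⟩ : ∃ w, c.support.argmax (fun x => x.val.length) = some w := by
    cases h : c.support.argmax (fun x => x.val.length) with
    | none => exact absurd (List.argmax_eq_none.mp h) c.support_ne_nil
    | some w => exact ⟨w, rfl⟩
  rw [← Option.mem_def] at hwmem
  have hw : w ∈ c.support := List.argmax_mem hwmem
  have hmax : ∀ x ∈ c.support, x.val.length ≤ w.val.length :=
    fun x hx => List.le_of_mem_argmax (f := fun x : Vk k => x.val.length) hx hwmem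
  set c' := c.rotate w hw with hc'
  have hcyc : c'.IsCycle := hc.rotate hw
  have hmax' : ∀ x ∈ c'.support, x.val.length ≤ w.val.length := by
    intro x hx
    rw [c'.support_eq_cons, List.mem_cons] at hx
    rcases hx with rfl | hx
    · exact hmax _ hw
    · have hrot := SimpleGraph.Walk.support_rotate c w hw
      have : x ∈ c.support.tail := hrot.mem_iff.mp hx
      exact hmax _ (List.mem_of_mem_tail this)
  have hlen3 : 3 ≤ c'.length := hcyc.three_le_length
  have hne : c' ≠ SimpleGraph.Walk.nil := by
    intro h; rw [h] at hlen3; simp at hlen3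
  obtain ⟨u₁, he₁, ht₁⟩ := first_edge k w c' hne hmax'
  have hmaxrev : ∀ x ∈ c'.reverse.support, x.val.length ≤ w.val.length := by
    intro x hx
    rw [SimpleGraph.Walk.support_reverse] at hx
    exact hmax' x (List.mem_reverse.mp hx)
  have hnerev : c'.reverse ≠ SimpleGraph.Walk.nil := by
    intro h
    have := congrArg SimpleGraph.Walk.length h
    rw [SimpleGraph.Walk.length_reverse] at this
    rw [this] at hlen3; simp at hlen3
  obtain ⟨u₂, he₂, ht₂⟩ := first_edge k w c'.reverse hnerev hmaxrev
  have hu : u₁ = u₂ := Subtype.ext (ht₁.trans ht₂.symm)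
  -- so head of edges = last of edges; contradict nodup with length ≥ 3
  rw [SimpleGraph.Walk.edges_reverse] at he₂
  have hnodup : c'.edges.Nodup := hcyc.edges_nodup
  have hlenE : 3 ≤ c'.edges.length := by rw [SimpleGraph.Walk.length_edges]; exact hlen3
  rcases hE : c'.edges with _ | ⟨e, rest⟩
  · rw [hE] at hlenE; simp at hlenE
  · rw [hE] at he₁ he₂ hnodup hlenE
    simp only [List.head?_cons, Option.some.injEq] at he₁
    have hrest : rest ≠ [] := by
      intro h; rw [h] at hlenE; simp at hlenE
    have hlast : (e :: rest).reverse.head? = some ((e :: rest).getLast (by simp)) := by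
      rw [List.head?_reverse, List.getLast?_eq_getLast (by simp)]
    rw [hlast] at he₂
    have he2' : (e :: rest).getLast (by simp) = s(w, u₂) := by
      simpa using he₂
    have : e ∈ rest := by
      rw [List.getLast_cons hrest] at he2'
      rw [he₁, hu, ← he2']
      exact List.getLast_mem hrest
    simp only [List.nodup_cons] at hnodup
    exact hnodup.1 this

lemma Gk_isTree (k : ℕ) : (Gk k).IsTree := ⟨Gk_connected k, Gk_acyclic k⟩


/-- There are trees on arbitrarily many vertices with pairs of proper 4-colorings such that
every 4-recoloring schedule between them has length `Ω(log n)`. -/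
theorem stmt_8 :
    ∃ c : ℝ, 0 < c ∧ ∀ N : ℕ, ∃ (V : Type) (_ : Fintype V) (G : SimpleGraph V),
      G.IsTree ∧ N ≤ Fintype.card V ∧
      ∃ s t : V → ℕ, IsProperColoring G 4 s ∧ IsProperColoring G 4 t ∧
        ∀ (ℓ : ℕ) (X : ℕ → V → ℕ), IsRecolorSchedule G 4 s t ℓ X →
          c * Real.logb 2 (Fintype.card V) ≤ (ℓ : ℝ) := by
  refine ⟨1/2, by norm_num, fun N => ?_⟩
  refine ⟨Vk N, instFintypeVk N, Gk N, Gk_isTree N, by have := le_card_Vk N; omega,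
    colr N 0, colr N 1, colr_proper N 0, colr_proper N 1, ?_⟩
  intro ℓ X hX
  obtain ⟨h0, hl, hp, hs⟩ := hX
  have hℓ : N + 1 ≤ ℓ := by
    by_contra hlt
    push_neg at hlt
    have hfr := freeze N ℓ X 0 h0 hp hs ℓ (le_refl ℓ) ⟨[], by simp⟩ (by simp; omega)
    rw [hl] at hfr
    simp [colr, off] at hfr
    exact absurd hfr (by decide)
  have hpos : (0:ℝ) < Fintype.card (Vk N) := by
    have : Nonempty (Vk N) := ⟨⟨[], by simp⟩⟩
    exact_mod_cast Fintype.card_pos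
  have hcard : (Fintype.card (Vk N) : ℝ) ≤ (2:ℝ) ^ (2*ℓ) := by
    have h1 : Fintype.card (Vk N) ≤ 2 ^ (2*ℓ) := by
      calc Fintype.card (Vk N) ≤ 4 ^ (N+1) := card_Vk_le N
        _ ≤ 4 ^ ℓ := Nat.pow_le_pow_right (by norm_num) hℓ
        _ = 2 ^ (2*ℓ) := by rw [pow_mul]; norm_num
    exact_mod_cast h1
  have hlog : Real.logb 2 (Fintype.card (Vk N)) ≤ 2*ℓ := by
    calc Real.logb 2 (Fintype.card (Vk N)) ≤ Real.logb 2 ((2:ℝ) ^ (2*ℓ)) :=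
          Real.logb_le_logb_of_le (by norm_num) hpos hcard
      _ = (2*ℓ : ℕ) * Real.logb 2 2 := Real.logb_pow 2 2 (2*ℓ)
      _ = 2*ℓ := by rw [Real.logb_self_eq_one (by norm_num)]; push_cast; ring
  linarith
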